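/- The formula Θ_X defines the family of subteams of X: for every team X over N = {p₁,…,p_n} and every team Y over N, Y ⊨ Θ_X if and only if Y ⊆ X. -/

import Mathlib

/-- PL-formulas in negation normal form over variables `V`. -/
inductive PL (V : Type) : Type
  | pos : V → PL V
  | neg : V → PL V
  | bot : PL V
  | top : PL V
  | conj : PL V → PL V → PL V
  | disj : PL V → PL V → PL V

/-- Team semantics of PL-formulas. -/
def PL.tsat {V : Type} : PL V → Set (V → Bool) → Prop
  | .pos p, X => ∀ v ∈ X, v p = true
  | .neg p, X => ∀ v ∈ X, v p = false
  | .bot, X => X = ∅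
  | .top, _ => True
  | .conj φ ψ, X => PL.tsat φ X ∧ PL.tsat ψ X
  | .disj φ ψ, X => ∃ Y Z : Set (V → Bool), X = Y ∪ Z ∧ PL.tsat φ Y ∧ PL.tsat ψ Z

/-- Finite conjunction of a list of formulas (empty conjunction is `⊤`). -/
def PL.bigConj {V : Type} (l : List (PL V)) : PL V := l.foldr .conj .top

/-- Finite disjunction of a list of formulas (empty disjunction is `⊥`). -/
def PL.bigDisj {V : Type} (l : List (PL V)) : PL V := l.foldr .disj .bot

/-- The conjunction `p₁^{v(p₁)} ∧ ⋯ ∧ p_n^{v(p_n)}` describing the valuation `v`,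
where `p^1 = p` and `p^0 = ¬p`. -/
noncomputable def PL.lineOf {V : Type} [Fintype V] (v : V → Bool) : PL V :=
  PL.bigConj ((Finset.univ : Finset V).toList.map fun p =>
    if v p then .pos p else .neg p)

/-- The formula `Θ_X := ⋁_{v ∈ X} (p₁^{v(p₁)} ∧ ⋯ ∧ p_n^{v(p_n)})`. -/
noncomputable def PL.Theta {V : Type} [Fintype V] (X : Finset (V → Bool)) : PL V :=
  PL.bigDisj (X.toList.map PL.lineOf)

lemma tsat_bigConj {V : Type} (l : List (PL V)) (X : Set (V → Bool)) :
    PL.tsat (PL.bigConj l) X ↔ ∀ φ ∈ l, PL.tsat φ X := by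
  induction l with
  | nil => simp [PL.bigConj, PL.tsat]
  | cons φ l ih => simp [PL.bigConj, PL.tsat, PL.bigConj] at ih ⊢; tauto

lemma tsat_lineOf {V : Type} [Fintype V] (v : V → Bool) (Y : Set (V → Bool)) :
    PL.tsat (PL.lineOf v) Y ↔ ∀ w ∈ Y, w = v := by
  rw [PL.lineOf, tsat_bigConj]
  constructor
  · intro h w hw
    funext p
    have hp : (if v p then PL.pos p else PL.neg p) ∈
        ((Finset.univ : Finset V).toList.map fun p => if v p then PL.pos p else PL.neg p) :=
      List.mem_map_of_mem (f := fun p => if v p then PL.pos p else PL.neg p) (by simp [Finset.mem_toList])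
    have := h _ hp
    by_cases hvp : v p
    · simp [hvp, PL.tsat] at this ⊢; exact this w hw
    · simp [hvp, PL.tsat] at this ⊢
      simp [this w hw, Bool.of_not_eq_true hvp]
  · intro h φ hφ
    simp only [List.mem_map] at hφ
    obtain ⟨p, -, rfl⟩ := hφ
    by_cases hvp : v p
    · simp [hvp, PL.tsat]; intro w hw; rw [h w hw]; exact hvp
    · simp [hvp, PL.tsat]; intro w hw; rw [h w hw]; exact Bool.eq_false_iff.mpr hvp

lemma tsat_bigDisj_lineOf {V : Type} [Fintype V] (l : List (V → Bool)) (Y : Set (V → Bool)) :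
    PL.tsat (PL.bigDisj (l.map PL.lineOf)) Y ↔ ∀ w ∈ Y, w ∈ l := by
  induction l generalizing Y with
  | nil =>
    simp only [List.map_nil, PL.bigDisj, List.foldr_nil, PL.tsat, List.not_mem_nil]
    constructor
    · rintro rfl; simp
    · intro h; ext w; simp; exact fun hw => h w hw
  | cons v l ih =>
    simp only [List.map_cons, PL.bigDisj, List.foldr_cons, PL.tsat]
    constructor
    · rintro ⟨A, B, rfl, hA, hB⟩ w hw
      rw [tsat_lineOf] at hA
      rcases hw with hw | hw
      · simp [hA w hw]
      · exact List.mem_cons_of_mem _ ((ih B).mp hB w hw)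
    · intro h
      refine ⟨{w ∈ Y | w = v}, {w ∈ Y | w ∈ l}, ?_, ?_, ?_⟩
      · ext w
        simp only [Set.mem_union, Set.mem_setOf_eq]
        constructor
        · intro hw
          rcases List.mem_cons.mp (h w hw) with h1 | h1
          · exact Or.inl ⟨hw, h1⟩
          · exact Or.inr ⟨hw, h1⟩
        · rintro (⟨hw, -⟩ | ⟨hw, -⟩) <;> exact hw
      · rw [tsat_lineOf]; rintro w ⟨-, rfl⟩; rfl
      · exact (ih _).mpr fun w hw => hw.2

/-- `Θ_X` defines the family of subteams of `X`: a team `Y` satisfies `Θ_X`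
if and only if `Y ⊆ X`. -/
theorem Theta_defines_subteams {V : Type} [Fintype V] [Nonempty V]
    (X : Finset (V → Bool)) (Y : Set (V → Bool)) :
    PL.tsat (PL.Theta X) Y ↔ Y ⊆ (X : Set (V → Bool)) := by
  rw [PL.Theta, tsat_bigDisj_lineOf]
  simp [Set.subset_def, Finset.mem_toList]
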